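/- Let (A,C,ψ) and (A',C',ψ') be entwining structures over a field k. Define (ψ ⊗ ψ'): (C ⊗ C') ⊗ (A ⊗ A') → (A ⊗ A') ⊗ (C ⊗ C') by (ψ ⊗ ψ')(c ⊗ c' ⊗ a ⊗ a') = a_ψ ⊗ a'_{ψ'} ⊗ c^ψ ⊗ c'^{ψ'}. Then (A ⊗ A', C ⊗ C', ψ ⊗ ψ') is an entwining structure, where A ⊗ A' has the tensor product algebra structure and C ⊗ C' the tensor product coalgebra structure. -/

import Mathlib

open TensorProduct

/-- An entwining structure `(A, C, ψ)` over a field `k`: a unital `k`-algebra `A`,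
a counital `k`-coalgebra `C` and a `k`-linear map `ψ : C ⊗ A → A ⊗ C` satisfying the
entwining axioms of Brzeziński–Majid. -/
structure Entwining (k A C : Type) [Field k] [Ring A] [Algebra k A]
    [AddCommGroup C] [Module k C] [Coalgebra k C] : Type where
  ψ : C ⊗[k] A →ₗ[k] A ⊗[k] C
  mul_compat : ψ ∘ₗ TensorProduct.map (LinearMap.id : C →ₗ[k] C) (LinearMap.mul' k A) =
    TensorProduct.map (LinearMap.mul' k A) (LinearMap.id : C →ₗ[k] C)
      ∘ₗ (TensorProduct.assoc k A A C).symm.toLinearMap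
      ∘ₗ TensorProduct.map (LinearMap.id : A →ₗ[k] A) ψ
      ∘ₗ (TensorProduct.assoc k A C A).toLinearMap
      ∘ₗ TensorProduct.map ψ (LinearMap.id : A →ₗ[k] A)
      ∘ₗ (TensorProduct.assoc k C A A).symm.toLinearMap
  comul_compat : TensorProduct.map (LinearMap.id : A →ₗ[k] A)
        (CoalgebraStruct.comul (R := k) (A := C)) ∘ₗ ψ =
    (TensorProduct.assoc k A C C).toLinearMap
      ∘ₗ TensorProduct.map ψ (LinearMap.id : C →ₗ[k] C)
      ∘ₗ (TensorProduct.assoc k C A C).symm.toLinearMap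
      ∘ₗ TensorProduct.map (LinearMap.id : C →ₗ[k] C) ψ
      ∘ₗ (TensorProduct.assoc k C C A).toLinearMap
      ∘ₗ TensorProduct.map (CoalgebraStruct.comul (R := k) (A := C)) (LinearMap.id : A →ₗ[k] A)
  counit_compat : (TensorProduct.rid k A).toLinearMap
      ∘ₗ TensorProduct.map (LinearMap.id : A →ₗ[k] A)
        (CoalgebraStruct.counit (R := k) (A := C)) ∘ₗ ψ =
    (TensorProduct.lid k A).toLinearMap
      ∘ₗ TensorProduct.map (CoalgebraStruct.counit (R := k) (A := C)) (LinearMap.id : A →ₗ[k] A)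
  unit_compat : ∀ c : C, ψ (c ⊗ₜ[k] (1 : A)) = (1 : A) ⊗ₜ[k] c

variable {k A C A' C' : Type}

section Aux

set_option maxHeartbeats 2000000
set_option synthInstance.maxHeartbeats 1000000

variable [Field k] [Ring A] [Algebra k A] [AddCommGroup C] [Module k C] [Coalgebra k C]
  [Ring A'] [Algebra k A'] [AddCommGroup C'] [Module k C'] [Coalgebra k C']

lemma TEnt_mul_pt (e : Entwining k A C) (c : C) (a b : A) :
    e.ψ (c ⊗ₜ[k] (a * b)) =
      TensorProduct.map (LinearMap.mul' k A) LinearMap.id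
        ((TensorProduct.assoc k A A C).symm
          (TensorProduct.map LinearMap.id e.ψ
            ((TensorProduct.assoc k A C A) (e.ψ (c ⊗ₜ[k] a) ⊗ₜ[k] b)))) := by
  have h := LinearMap.congr_fun e.mul_compat (c ⊗ₜ[k] (a ⊗ₜ[k] b))
  simpa using h

lemma TEnt_comul_pt (e : Entwining k A C) (c : C) (a : A) :
    TensorProduct.map LinearMap.id (CoalgebraStruct.comul (R := k) (A := C)) (e.ψ (c ⊗ₜ[k] a)) =
      (TensorProduct.assoc k A C C)
        (TensorProduct.map e.ψ LinearMap.id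
          ((TensorProduct.assoc k C A C).symm
            (TensorProduct.map LinearMap.id e.ψ
              ((TensorProduct.assoc k C C A)
                ((CoalgebraStruct.comul (R := k) (A := C) c) ⊗ₜ[k] a))))) := by
  have h := LinearMap.congr_fun e.comul_compat (c ⊗ₜ[k] a)
  simpa using h

lemma TEnt_counit_pt (e : Entwining k A C) (c : C) (a : A) :
    (TensorProduct.rid k A)
      (TensorProduct.map LinearMap.id (CoalgebraStruct.counit (R := k) (A := C))
        (e.ψ (c ⊗ₜ[k] a))) = (CoalgebraStruct.counit (R := k) (A := C) c) • a := by
  have h := LinearMap.congr_fun e.counit_compat (c ⊗ₜ[k] a)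
  simpa using h

lemma TEnt_comul_tmul (c : C) (c' : C') :
    CoalgebraStruct.comul (R := k) (A := C ⊗[k] C') (c ⊗ₜ[k] c') =
      TensorProduct.tensorTensorTensorComm k C C C' C'
        (CoalgebraStruct.comul (R:=k) c ⊗ₜ[k] CoalgebraStruct.comul (R:=k) c') := by
  simp only [Coalgebra.comul, LinearMap.coe_comp, LinearEquiv.coe_coe, Function.comp_apply,
    map_tmul, AlgebraTensorModule.map_tmul, AlgebraTensorModule.tensorTensorTensorComm_eq]

lemma TEnt_counit_tmul (c : C) (c' : C') :
    CoalgebraStruct.counit (R := k) (A := C ⊗[k] C') (c ⊗ₜ[k] c') =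
      CoalgebraStruct.counit (R:=k) c * CoalgebraStruct.counit (R:=k) c' := by
  simp only [Coalgebra.counit, LinearMap.coe_comp, Function.comp_apply, map_tmul,
    LinearMap.mul'_apply, LinearEquiv.coe_coe, AlgebraTensorModule.map_tmul,
    AlgebraTensorModule.rid_tmul, smul_eq_mul]
  exact mul_comm _ _

lemma TEnt_G (x : A ⊗[k] C) (y : A' ⊗[k] C') :
    TensorProduct.map LinearMap.id (CoalgebraStruct.comul (R := k) (A := C ⊗[k] C'))
      (TensorProduct.tensorTensorTensorComm k A C A' C' (x ⊗ₜ[k] y)) =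
    TensorProduct.map LinearMap.id
        (TensorProduct.tensorTensorTensorComm k C C C' C').toLinearMap
      (TensorProduct.tensorTensorTensorComm k A (C ⊗[k] C) A' (C' ⊗[k] C')
        ((TensorProduct.map LinearMap.id (CoalgebraStruct.comul (R := k) (A := C)) x) ⊗ₜ[k]
          (TensorProduct.map LinearMap.id (CoalgebraStruct.comul (R := k) (A := C')) y))) := by
  induction x using TensorProduct.induction_on with
  | zero => simp
  | add u v hu hv => simp only [map_add, add_tmul, tmul_add] at hu hv ⊢; rw [hu, hv]
  | tmul p q =>
    induction y using TensorProduct.induction_on with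
    | zero => simp
    | add u v hu hv => simp only [map_add, add_tmul, tmul_add] at hu hv ⊢; rw [hu, hv]
    | tmul p' q' => simp [TEnt_comul_tmul, AlgebraTensorModule.tensorTensorTensorComm_eq]

lemma TEnt_E (x : A ⊗[k] C) (y : A' ⊗[k] C') :
    (TensorProduct.rid k (A ⊗[k] A'))
      (TensorProduct.map LinearMap.id (CoalgebraStruct.counit (R := k) (A := C ⊗[k] C'))
        (TensorProduct.tensorTensorTensorComm k A C A' C' (x ⊗ₜ[k] y))) =
    ((TensorProduct.rid k A)
        (TensorProduct.map LinearMap.id (CoalgebraStruct.counit (R := k) (A := C)) x)) ⊗ₜ[k]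
      ((TensorProduct.rid k A')
        (TensorProduct.map LinearMap.id (CoalgebraStruct.counit (R := k) (A := C')) y)) := by
  induction x using TensorProduct.induction_on with
  | zero => simp
  | add u v hu hv => simp only [map_add, add_tmul, tmul_add] at hu hv ⊢; rw [hu, hv]
  | tmul p q =>
    induction y using TensorProduct.induction_on with
    | zero => simp
    | add u v hu hv => simp only [map_add, add_tmul, tmul_add] at hu hv ⊢; rw [hu, hv]
    | tmul p' q' =>
      simp [TEnt_counit_tmul, smul_tmul, tmul_smul, smul_smul, mul_comm]

end Aux

set_option maxHeartbeats 4000000 in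
set_option synthInstance.maxHeartbeats 1000000 in
/-- If `(A,C,ψ)` and `(A',C',ψ')` are entwining structures, then the map
`(ψ ⊗ ψ')((c ⊗ c') ⊗ (a ⊗ a')) = (a_ψ ⊗ a'_{ψ'}) ⊗ (c^ψ ⊗ c'^{ψ'})` makes
`(A ⊗ A', C ⊗ C', ψ ⊗ ψ')` an entwining structure. -/
theorem tensor_entwining
    [Field k] [Ring A] [Algebra k A] [AddCommGroup C] [Module k C] [Coalgebra k C]
    [Ring A'] [Algebra k A'] [AddCommGroup C'] [Module k C'] [Coalgebra k C']
    (e : Entwining k A C) (e' : Entwining k A' C')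
    (Ψ : (C ⊗[k] C') ⊗[k] (A ⊗[k] A') →ₗ[k] (A ⊗[k] A') ⊗[k] (C ⊗[k] C'))
    (hΨ : ∀ (c : C) (c' : C') (a : A) (a' : A'),
      Ψ ((c ⊗ₜ[k] c') ⊗ₜ[k] (a ⊗ₜ[k] a')) =
        TensorProduct.tensorTensorTensorComm k A C A' C'
          ((e.ψ (c ⊗ₜ[k] a)) ⊗ₜ[k] (e'.ψ (c' ⊗ₜ[k] a')))) :
    ∃ E : Entwining k (A ⊗[k] A') (C ⊗[k] C'), E.ψ = Ψ := by
  refine ⟨⟨Ψ, ?_, ?_, ?_, ?_⟩, rfl⟩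
  · -- mul_compat
    ext c c' a a' b b'
    simp only [TensorProduct.AlgebraTensorModule.curry_apply, LinearMap.coe_comp,
      LinearMap.coe_restrictScalars, Function.comp_apply, TensorProduct.curry_apply,
      LinearEquiv.coe_coe, map_tmul, LinearMap.id_coe, id_eq, LinearMap.mul'_apply,
      assoc_symm_tmul, assoc_tmul, Algebra.TensorProduct.tmul_mul_tmul]
    rw [hΨ, hΨ, TEnt_mul_pt, TEnt_mul_pt]
    generalize e.ψ (c ⊗ₜ[k] a) = x
    generalize e'.ψ (c' ⊗ₜ[k] a') = y
    induction x using TensorProduct.induction_on with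
    | zero => simp
    | add u v hu hv => simp only [map_add, add_tmul, tmul_add] at hu hv ⊢; rw [hu, hv]
    | tmul p q =>
      induction y using TensorProduct.induction_on with
      | zero => simp
      | add u v hu hv => simp only [map_add, add_tmul, tmul_add] at hu hv ⊢; rw [hu, hv]
      | tmul p' q' =>
        simp only [assoc_tmul, map_tmul, LinearMap.id_coe, id_eq, tensorTensorTensorComm_tmul,
          assoc_symm_tmul, LinearMap.mul'_apply]
        rw [hΨ]
        generalize e.ψ (q ⊗ₜ[k] b) = u
        generalize e'.ψ (q' ⊗ₜ[k] b') = v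
        induction u using TensorProduct.induction_on with
        | zero => simp
        | add u v hu hv => simp only [map_add, add_tmul, tmul_add] at hu hv ⊢; rw [hu, hv]
        | tmul s t =>
          induction v using TensorProduct.induction_on with
          | zero => simp
          | add u v hu hv => simp only [map_add, add_tmul, tmul_add] at hu hv ⊢; rw [hu, hv]
          | tmul s' t' => simp [Algebra.TensorProduct.tmul_mul_tmul]
  · -- comul_compat
    ext c c' a a'
    simp only [TensorProduct.AlgebraTensorModule.curry_apply, LinearMap.coe_comp,
      LinearMap.coe_restrictScalars, Function.comp_apply, TensorProduct.curry_apply,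
      LinearEquiv.coe_coe, map_tmul, LinearMap.id_coe, id_eq]
    rw [hΨ, TEnt_G, TEnt_comul_pt, TEnt_comul_pt, TEnt_comul_tmul]
    generalize CoalgebraStruct.comul (R := k) (A := C) c = w
    generalize CoalgebraStruct.comul (R := k) (A := C') c' = w'
    induction w using TensorProduct.induction_on with
    | zero => simp
    | add u v hu hv => simp only [map_add, add_tmul, tmul_add] at hu hv ⊢; rw [hu, hv]
    | tmul c1 c2 =>
      induction w' using TensorProduct.induction_on with
      | zero => simp
      | add u v hu hv => simp only [map_add, add_tmul, tmul_add] at hu hv ⊢; rw [hu, hv]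
      | tmul c1' c2' =>
        simp only [assoc_tmul, map_tmul, LinearMap.id_coe, id_eq, tensorTensorTensorComm_tmul,
          assoc_symm_tmul]
        rw [hΨ]
        generalize e.ψ (c2 ⊗ₜ[k] a) = x
        generalize e'.ψ (c2' ⊗ₜ[k] a') = y
        induction x using TensorProduct.induction_on with
        | zero => simp
        | add u v hu hv => simp only [map_add, add_tmul, tmul_add] at hu hv ⊢; rw [hu, hv]
        | tmul p q =>
          induction y using TensorProduct.induction_on with
          | zero => simp
          | add u v hu hv => simp only [map_add, add_tmul, tmul_add] at hu hv ⊢; rw [hu, hv]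
          | tmul p' q' =>
            simp only [assoc_symm_tmul, map_tmul, LinearMap.id_coe, id_eq,
              tensorTensorTensorComm_tmul, assoc_tmul]
            rw [hΨ]
            generalize e.ψ (c1 ⊗ₜ[k] p) = u
            generalize e'.ψ (c1' ⊗ₜ[k] p') = v
            induction u using TensorProduct.induction_on with
            | zero => simp
            | add u v hu hv => simp only [map_add, add_tmul, tmul_add] at hu hv ⊢; rw [hu, hv]
            | tmul s t =>
              induction v using TensorProduct.induction_on with
              | zero => simp
              | add u v hu hv => simp only [map_add, add_tmul, tmul_add] at hu hv ⊢; rw [hu, hv]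
              | tmul s' t' => simp
  · -- counit_compat
    ext c c' a a'
    simp only [TensorProduct.AlgebraTensorModule.curry_apply, LinearMap.coe_comp,
      LinearMap.coe_restrictScalars, Function.comp_apply, TensorProduct.curry_apply,
      LinearEquiv.coe_coe, map_tmul, LinearMap.id_coe, id_eq, lid_tmul]
    rw [hΨ, TEnt_E, TEnt_counit_pt, TEnt_counit_pt, TEnt_counit_tmul]
    simp [smul_tmul, tmul_smul, smul_smul, mul_comm]
  · -- unit_compat
    intro z
    induction z using TensorProduct.induction_on with
    | zero => simp
    | add u v hu hv => simp only [add_tmul, tmul_add, map_add, hu, hv]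
    | tmul c c' =>
      rw [Algebra.TensorProduct.one_def, hΨ, e.unit_compat, e'.unit_compat]
      simp
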